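/- Let $X \subseteq \binom{[n]}{k}$ be a collection of $k$-subsets of $[n]$ with the quasi-exchange property (for all $x, y \in X$, if $i \in x \setminus y$ and $i > \max(y \setminus x)$, then there exists $j \in y \setminus x$ with $(x \setminus \{i\}) \cup \{j\} \in X$). Then any linear extension of the Gale (Bruhat) order on $X$ is a shelling order of the pure simplicial complex whose facets are the elements of $X$. -/

import Mathlib

/-- Increasing enumeration of a finite set of naturals. -/
def sortedL (x : Finset ℕ) : List ℕ := x.sort (· ≤ ·)

/-- The Gale (Bruhat) order on finite subsets of ℕ: componentwise comparison of
the increasing enumerations. -/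
def GaleLE (x y : Finset ℕ) : Prop :=
  ∀ i (hx : i < (sortedL x).length) (hy : i < (sortedL y).length),
    (sortedL x).get ⟨i, hx⟩ ≤ (sortedL y).get ⟨i, hy⟩

def GaleLT (x y : Finset ℕ) : Prop := GaleLE x y ∧ x ≠ y

/-- The quasi-exchange property. -/
def QuasiExchange (X : Set (Finset ℕ)) : Prop :=
  ∀ x ∈ X, ∀ y ∈ X, ∀ i ∈ x \ y, (y \ x).Nonempty → (∀ m ∈ y \ x, m < i) →
    ∃ j ∈ y \ x, (x \ {i}) ∪ {j} ∈ X

/-- `C` is a shelling order: for all `i < j` there is `z < j` with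
`|C z ∩ C j| = k - 1` and `C i ∩ C j ⊆ C z ∩ C j`. -/
def IsShellingOrder (k : ℕ) {h : ℕ} (C : Fin h → Finset ℕ) : Prop :=
  ∀ i j : Fin h, i < j → ∃ z : Fin h, z < j ∧
    ((C z ∩ C j).card = k - 1 ∧ C i ∩ C j ⊆ C z ∩ C j)

lemma sortedL_length (x : Finset ℕ) : (sortedL x).length = x.card :=
  Finset.length_sort _

lemma sortedL_sorted (x : Finset ℕ) : (sortedL x).Pairwise (· ≤ ·) :=
  Finset.pairwise_sort _ _

lemma sortedL_nodup (x : Finset ℕ) : (sortedL x).Nodup :=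
  Finset.sort_nodup _ _

lemma mem_sortedL {x : Finset ℕ} {a : ℕ} : a ∈ sortedL x ↔ a ∈ x :=
  Finset.mem_sort _

/-- Lower bound: the first `i+1` entries witness `i+1` elements `≤` the `i`-th entry. -/
lemma count_ge_of_get (y : Finset ℕ) (i : ℕ) (h : i < (sortedL y).length) :
    i + 1 ≤ (y.filter (· ≤ (sortedL y).get ⟨i, h⟩)).card := by
  classical
  set l := sortedL y with hl
  have hs : ∀ m m' (hm : m < l.length) (hm' : m' < l.length), m ≤ m' → l[m] ≤ l[m'] := by
    intro m m' hm hm' hle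
    rcases eq_or_lt_of_le hle with rfl | hlt
    · rfl
    · exact List.pairwise_iff_getElem.1 (sortedL_sorted y) m m' hm hm' hlt
  have hsub : (l.take (i+1)).toFinset ⊆ y.filter (· ≤ l.get ⟨i, h⟩) := by
    intro a ha
    rw [List.mem_toFinset] at ha
    obtain ⟨m, hm, hma⟩ := List.mem_iff_getElem.1 ha
    have hm' : m < l.length ∧ m < i + 1 := by
      have := hm
      rw [List.length_take] at this
      exact ⟨lt_of_lt_of_le this (min_le_right _ _), lt_of_lt_of_le this (min_le_left _ _)⟩
    have hla : l[m] = a := by rw [← hma]; exact (List.getElem_take).symm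
    rw [Finset.mem_filter]
    constructor
    · rw [← mem_sortedL (x := y), ← hla]; exact List.getElem_mem _
    · show a ≤ l[i]
      rw [← hla]
      exact hs m i hm'.1 h (Nat.lt_succ_iff.1 hm'.2)
  have hcard : (l.take (i+1)).toFinset.card = i + 1 := by
    rw [List.toFinset_card_of_nodup ((List.take_sublist _ _).nodup (sortedL_nodup y))]
    rw [List.length_take]
    omega
  calc i + 1 = (l.take (i+1)).toFinset.card := hcard.symm
    _ ≤ _ := Finset.card_le_card hsub

/-- Upper bound: if at least `i+1` elements are `≤ t` then the `i`-th entry is `≤ t`. -/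
lemma get_le_of_count (x : Finset ℕ) (t i : ℕ) (h : i < (sortedL x).length)
    (hc : i + 1 ≤ (x.filter (· ≤ t)).card) : (sortedL x).get ⟨i, h⟩ ≤ t := by
  classical
  set l := sortedL x with hl
  by_contra hgt
  push_neg at hgt
  have hsub : x.filter (· ≤ t) ⊆ (l.take i).toFinset := by
    intro a ha
    rw [Finset.mem_filter] at ha
    obtain ⟨m, hm, hma⟩ := List.mem_iff_getElem.1 (mem_sortedL.2 ha.1)
    have hmi : m < i := by
      by_contra hge
      push_neg at hge
      have : l[i] ≤ l[m] := by
        rcases eq_or_lt_of_le hge with rfl | hlt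
        · rfl
        · exact List.pairwise_iff_getElem.1 (sortedL_sorted x) i m h hm hlt
      rw [hma] at this
      exact absurd (this.trans ha.2) (not_le.2 hgt)
    rw [List.mem_toFinset]
    have hmt : m < (l.take i).length := by rw [List.length_take]; omega
    have : (l.take i)[m] = a := by rw [List.getElem_take]; exact hma
    rw [← this]
    exact List.getElem_mem _
  have := Finset.card_le_card hsub
  have h2 : (l.take i).toFinset.card ≤ i := by
    calc (l.take i).toFinset.card ≤ (l.take i).length := List.toFinset_card_le _
      _ ≤ i := List.length_take_le _ _
  omega

lemma galeLE_of_counts {x y : Finset ℕ}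
    (h : ∀ t, (y.filter (· ≤ t)).card ≤ (x.filter (· ≤ t)).card) : GaleLE x y := by
  intro i hx hy
  exact get_le_of_count x _ i hx ((count_ge_of_get y i hy).trans (h _))

lemma count_exchange {y : Finset ℕ} {b c : ℕ} (hcb : c ≤ b) (hcy : c ∉ y) (t : ℕ) :
    (y.filter (· ≤ t)).card ≤ ((insert c (y.erase b)).filter (· ≤ t)).card := by
  classical
  apply Finset.card_le_card_of_injOn (fun a => if a = b then c else a)
  · intro a ha
    rw [Finset.mem_coe, Finset.mem_filter] at ha ⊢
    by_cases hab : a = b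
    · simp only [hab, if_pos rfl]
      exact ⟨Finset.mem_insert_self _ _, le_trans hcb (hab ▸ ha.2)⟩
    · simp only [if_neg hab]
      exact ⟨Finset.mem_insert_of_mem (Finset.mem_erase.2 ⟨hab, ha.1⟩), ha.2⟩
  · intro a1 h1 a2 h2 heq
    simp only [Finset.coe_filter, Set.mem_setOf_eq] at h1 h2
    by_cases e1 : a1 = b <;> by_cases e2 : a2 = b <;> simp only [e1, e2, if_pos, if_neg, ite_true, ite_false] at heq
    · rw [e1, e2]
    · exact absurd (heq ▸ h2.1) hcy
    · exact absurd (heq ▸ h1.1) hcy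
    · exact heq

lemma galeLE_trans {x y z : Finset ℕ} (hxy : x.card = y.card)
    (h1 : GaleLE x y) (h2 : GaleLE y z) : GaleLE x z := by
  intro i hx hz
  have hy : i < (sortedL y).length := by
    rw [sortedL_length] at hx ⊢; omega
  exact le_trans (h1 i hx hy) (h2 i hy hz)

/-- Key lemma. -/
lemma key_lemma (k : ℕ) (X : Set (Finset ℕ)) (hcard : ∀ x ∈ X, x.card = k)
    (hQE : QuasiExchange X) :
    ∀ d x y, x ∈ X → y ∈ X → (x \ y).card ≤ d → x ≠ y → ¬ GaleLT y x →
      ∃ z ∈ X, GaleLT z y ∧ (z ∩ y).card = k - 1 ∧ x ∩ y ⊆ z := by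
  classical
  intro d
  induction d with
  | zero =>
    intro x y hx hy hd hne _
    exfalso
    apply hne
    have : x \ y = ∅ := Finset.card_eq_zero.1 (Nat.le_zero.1 hd)
    have hsub : x ⊆ y := Finset.sdiff_eq_empty_iff_subset.1 this
    exact Finset.eq_of_subset_of_card_le hsub (le_of_eq ((hcard y hy).trans (hcard x hx).symm))
  | succ d ih =>
    intro x y hx hy hd hne hnlt
    -- both differences nonempty
    have hxy_ne : (x \ y).Nonempty := by
      rw [Finset.sdiff_nonempty]
      intro hsub
      exact hne (Finset.eq_of_subset_of_card_le hsub
        (le_of_eq ((hcard y hy).trans (hcard x hx).symm)))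
    have hyx_ne : (y \ x).Nonempty := by
      rw [Finset.sdiff_nonempty]
      intro hsub
      exact hne (Finset.eq_of_subset_of_card_le hsub
        (le_of_eq ((hcard x hx).trans (hcard y hy).symm))).symm
    set a := (x \ y).max' hxy_ne with ha
    set b := (y \ x).max' hyx_ne with hb
    have hax : a ∈ x \ y := (x \ y).max'_mem hxy_ne
    have hbx : b ∈ y \ x := (y \ x).max'_mem hyx_ne
    have hab : a ≠ b := by
      intro hEq
      have := Finset.mem_sdiff.1 hax
      have := Finset.mem_sdiff.1 hbx
      rw [hEq] at *
      tauto
    rcases lt_or_gt_of_ne hab with hlt | hgt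
    · -- Case 1 : a < b, exchange in y
      obtain ⟨c, hc, hzX⟩ := hQE y hy x hx b hbx hxy_ne
        (fun m hm => lt_of_le_of_lt ((x \ y).le_max' m hm) hlt)
      have hcx := Finset.mem_sdiff.1 hc
      have hcb : c < b := lt_of_le_of_lt ((x \ y).le_max' c hc) hlt
      have hby := Finset.mem_sdiff.1 hbx
      set z := (y \ {b}) ∪ {c} with hz
      have hzeq : z = insert c (y.erase b) := by
        rw [hz, Finset.sdiff_singleton_eq_erase, Finset.union_comm, ← Finset.insert_eq]
      refine ⟨z, hzX, ⟨?_, ?_⟩, ?_, ?_⟩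
      · -- GaleLE z y
        rw [hzeq]
        exact galeLE_of_counts (count_exchange hcb.le hcx.2)
      · -- z ≠ y
        intro hEq
        apply hcx.2
        rw [← hEq, hzeq]
        exact Finset.mem_insert_self _ _
      · -- card
        have : z ∩ y = y.erase b := by
          rw [hzeq, Finset.insert_inter_of_notMem hcx.2]
          exact Finset.inter_eq_left.2 (Finset.erase_subset _ _)
        rw [this, Finset.card_erase_of_mem hby.1, hcard y hy]
      · -- x ∩ y ⊆ z
        intro u hu
        rw [Finset.mem_inter] at hu
        rw [hzeq]
        apply Finset.mem_insert_of_mem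
        apply Finset.mem_erase.2
        exact ⟨fun hEq => hby.2 (hEq ▸ hu.1), hu.2⟩
    · -- Case 2 : b < a, exchange in x, induct
      obtain ⟨j, hj, hx2X⟩ := hQE x hx y hy a hax hyx_ne
        (fun m hm => lt_of_le_of_lt ((y \ x).le_max' m hm) hgt)
      have hjx := Finset.mem_sdiff.1 hj
      have hja : j < a := lt_of_le_of_lt ((y \ x).le_max' j hj) hgt
      have haxm := Finset.mem_sdiff.1 hax
      set x₂ := (x \ {a}) ∪ {j} with hx2
      have hx2eq : x₂ = insert j (x.erase a) := by
        rw [hx2, Finset.sdiff_singleton_eq_erase, Finset.union_comm, ← Finset.insert_eq]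
      have hle2 : GaleLE x₂ x := by
        rw [hx2eq]
        exact galeLE_of_counts (count_exchange hja.le hjx.2)
      have hne2 : x₂ ≠ y := by
        intro hEq
        apply hnlt
        refine ⟨?_, hne.symm⟩
        rw [← hEq]
        exact hle2
      have hnlt2 : ¬ GaleLT y x₂ := by
        rintro ⟨h1, _⟩
        apply hnlt
        refine ⟨galeLE_trans ((hcard y hy).trans (hcard _ hx2X).symm) h1 hle2, hne.symm⟩
      have hdiff : x₂ \ y = (x \ y).erase a := by
        ext u
        simp only [hx2eq, Finset.mem_sdiff, Finset.mem_insert, Finset.mem_erase]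
        constructor
        · rintro ⟨hu1 | hu2, hu3⟩
          · subst hu1; exact absurd hjx.1 hu3
          · exact ⟨hu2.1, hu2.2, hu3⟩
        · rintro ⟨hu1, hu2, hu3⟩
          exact ⟨Or.inr ⟨hu1, hu2⟩, hu3⟩
      have hd2 : (x₂ \ y).card ≤ d := by
        rw [hdiff, Finset.card_erase_of_mem hax]
        omega
      obtain ⟨z, hzX, hzlt, hzcard, hzsub⟩ := ih x₂ y hx2X hy hd2 hne2 hnlt2
      refine ⟨z, hzX, hzlt, hzcard, ?_⟩
      intro u hu
      rw [Finset.mem_inter] at hu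
      apply hzsub
      rw [Finset.mem_inter, hx2eq]
      refine ⟨Finset.mem_insert_of_mem (Finset.mem_erase.2 ⟨?_, hu.1⟩), hu.2⟩
      intro hEq
      exact haxm.2 (hEq ▸ hu.2)

/-- Any linear extension of the Gale order on a collection of `k`-subsets of `[n]`
with the quasi-exchange property is a shelling order. -/
theorem quasiExchange_linear_extension_is_shelling
    (n k h : ℕ) (X : Set (Finset ℕ))
    (hX : ∀ x ∈ X, x ⊆ Finset.Icc 1 n ∧ x.card = k)
    (hQE : QuasiExchange X)
    (L : Fin h → Finset ℕ)
    (hinj : Function.Injective L)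
    (himg : ∀ x, x ∈ X ↔ ∃ i, L i = x)
    (hlin : ∀ i j : Fin h, GaleLT (L i) (L j) → i < j) :
    IsShellingOrder k L := by
  intro i j hij
  have hxi : L i ∈ X := (himg (L i)).2 ⟨i, rfl⟩
  have hyj : L j ∈ X := (himg (L j)).2 ⟨j, rfl⟩
  have hne : L i ≠ L j := fun hEq => (Nat.ne_of_lt hij) (congrArg Fin.val (hinj hEq))
  have hnlt : ¬ GaleLT (L j) (L i) := fun hGL => absurd (hlin j i hGL) (not_lt.2 hij.le)
  obtain ⟨z, hzX, hzlt, hzcard, hzsub⟩ :=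
    key_lemma k X (fun x hx => (hX x hx).2) hQE ((L i) \ (L j)).card (L i) (L j)
      hxi hyj le_rfl hne hnlt
  obtain ⟨m, rfl⟩ := (himg z).1 hzX
  refine ⟨m, hlin m j hzlt, hzcard, ?_⟩
  intro u hu
  rw [Finset.mem_inter] at hu ⊢
  exact ⟨hzsub (Finset.mem_inter.2 hu), hu.2⟩
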